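/- Suppose users are ordered so that p₁/w̄₁ ≥ p₂/w̄₂ ≥ ⋯ ≥ p_K/w̄_K with all p_k > 0 and w̄_k > 0. Define ŵ_k = (w_tot − ∑_{k'<k} w̄_{k'}) · p_k / (∑_{k'≥k} p_{k'}). If ŵ_k > w̄_k for some k, then ŵ_l > w̄_l for all l ≤ k; and if ŵ_k ≤ w̄_k, then ŵ_l ≤ w̄_l for all l ≥ k. Consequently there is a unique integer K₁ ∈ {0,1,…,K} with ŵ_k > w̄_k exactly for 1 ≤ k ≤ K₁. -/

import Mathlib

/-- The due share of user `k`: remaining bandwidth after the first users take their upper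
limits, shared proportionally among users `k, …, K`. -/
noncomputable def dueShare (K : ℕ) (p wb : Fin K → ℝ) (wtot : ℝ) (k : Fin K) : ℝ :=
  (wtot - ∑ k' ∈ Finset.univ.filter (fun k' : Fin K => k' < k), wb k') * p k /
    (∑ k' ∈ Finset.univ.filter (fun k' : Fin K => k ≤ k'), p k')

/-- If users are ordered by non-increasing minimal PSD `p_k/w̄_k`, then oversizedness
(`ŵ_k > w̄_k`) propagates downward in index, non-oversizedness propagates upward, and there
is a unique `K₁ ∈ {0,…,K}` such that exactly the first `K₁` users are oversized. -/
theorem stmt_2 (K : ℕ) (p wb : Fin K → ℝ) (hp : ∀ k, 0 < p k) (hwb : ∀ k, 0 < wb k)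
    (wtot : ℝ) (hwtot : 0 < wtot)
    (hord : ∀ i j : Fin K, i ≤ j → p j / wb j ≤ p i / wb i) :
    (∀ k : Fin K, dueShare K p wb wtot k > wb k →
      ∀ l : Fin K, l ≤ k → dueShare K p wb wtot l > wb l) ∧
    (∀ k : Fin K, dueShare K p wb wtot k ≤ wb k →
      ∀ l : Fin K, k ≤ l → dueShare K p wb wtot l ≤ wb l) ∧
    (∃! K₁ : ℕ, K₁ ≤ K ∧ ∀ k : Fin K, (dueShare K p wb wtot k > wb k ↔ (k : ℕ) < K₁)) := by
  set d := dueShare K p wb wtot with hd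
  have hSpos : ∀ k : Fin K,
      0 < ∑ k' ∈ Finset.univ.filter (fun k' : Fin K => k ≤ k'), p k' := by
    intro k
    apply Finset.sum_pos (fun i _ => hp i)
    exact ⟨k, by simp⟩
  -- one-step propagation
  have step : ∀ (n : ℕ) (h1 : n + 1 < K),
      d ⟨n, Nat.lt_of_succ_lt h1⟩ ≤ wb ⟨n, Nat.lt_of_succ_lt h1⟩ →
      d ⟨n + 1, h1⟩ ≤ wb ⟨n + 1, h1⟩ := by
    intro n h1 hyp
    set k : Fin K := ⟨n, Nat.lt_of_succ_lt h1⟩ with hk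
    set k' : Fin K := ⟨n + 1, h1⟩ with hk'
    have hnotmem1 : k ∉ Finset.univ.filter (fun j : Fin K => k' ≤ j) := by
      simp [hk, hk', Fin.le_def]
    have hnotmem2 : k ∉ Finset.univ.filter (fun j : Fin K => j < k) := by
      simp [Fin.lt_def, -Fin.val_fin_lt]
    have hfilter1 : Finset.univ.filter (fun j : Fin K => k ≤ j) =
        insert k (Finset.univ.filter (fun j : Fin K => k' ≤ j)) := by
      ext j
      simp only [Finset.mem_filter, Finset.mem_insert, Finset.mem_univ, true_and,
        Fin.le_def, Fin.ext_iff, hk, hk', Fin.val_mk]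
      omega
    have hfilter2 : Finset.univ.filter (fun j : Fin K => j < k') =
        insert k (Finset.univ.filter (fun j : Fin K => j < k)) := by
      ext j
      simp only [Finset.mem_filter, Finset.mem_insert, Finset.mem_univ, true_and,
        Fin.lt_def, Fin.ext_iff, hk, hk', Fin.val_mk]
      omega
    set S' : ℝ := ∑ j ∈ Finset.univ.filter (fun j : Fin K => k' ≤ j), p j with hS'
    set W : ℝ := ∑ j ∈ Finset.univ.filter (fun j : Fin K => j < k), wb j with hW
    have hSsum : (∑ j ∈ Finset.univ.filter (fun j : Fin K => k ≤ j), p j) = p k + S' := by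
      rw [hfilter1, Finset.sum_insert hnotmem1]
    have hWsum : (∑ j ∈ Finset.univ.filter (fun j : Fin K => j < k'), wb j) = wb k + W := by
      rw [hfilter2, Finset.sum_insert hnotmem2]
    have hS'pos : 0 < S' := hSpos k'
    have hSpos' : 0 < p k + S' := by have := hp k; linarith
    have h1' : (wtot - W) * p k ≤ wb k * (p k + S') := by
      have := hyp
      rw [hd] at this
      unfold dueShare at this
      rw [hSsum] at this
      calc (wtot - W) * p k = ((wtot - W) * p k / (p k + S')) * (p k + S') := by
            field_simp
        _ ≤ wb k * (p k + S') := by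
            exact mul_le_mul_of_nonneg_right this hSpos'.le
    have h2 : p k' * wb k ≤ p k * wb k' := by
      have hord' := hord k k' (by simp [hk, hk', Fin.le_def])
      have := (div_le_div_iff₀ (hwb k') (hwb k)).mp hord'
      linarith
    rw [hd]
    unfold dueShare
    rw [hWsum, div_le_iff₀ hS'pos]
    nlinarith [mul_le_mul_of_nonneg_right h1' (hp k').le,
      mul_le_mul_of_nonneg_right h2 hS'pos.le, hp k, hp k', hS'pos]
  -- upward propagation of non-oversizedness
  have up : ∀ k : Fin K, d k ≤ wb k → ∀ l : Fin K, k ≤ l → d l ≤ wb l := by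
    intro k hk l hkl
    obtain ⟨m, hm⟩ := l
    have key : ∀ m (hm : m < K), (k : ℕ) ≤ m → d ⟨m, hm⟩ ≤ wb ⟨m, hm⟩ := by
      intro m
      induction m with
      | zero =>
        intro hm h0
        have : k = ⟨0, hm⟩ := Fin.ext (Nat.le_zero.mp h0)
        rw [← this]; exact hk
      | succ n ih =>
        intro hm hle
        rcases Nat.lt_or_ge (k : ℕ) (n + 1) with h | h
        · exact step n hm (ih (Nat.lt_of_succ_lt hm) (Nat.lt_succ_iff.mp h))
        · have : k = ⟨n + 1, hm⟩ := Fin.ext (le_antisymm hle h)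
          rw [← this]; exact hk
    exact key m hm hkl
  have down : ∀ k : Fin K, d k > wb k → ∀ l : Fin K, l ≤ k → d l > wb l := by
    intro k hk l hlk
    by_contra h
    exact absurd (up l (not_lt.mp h) k hlk) (not_le.mpr hk)
  refine ⟨down, up, ?_⟩
  -- existence and uniqueness of K₁
  by_cases hall : ∀ k : Fin K, d k > wb k
  · refine ⟨K, ⟨le_refl K, fun k => ⟨fun _ => k.2, fun _ => hall k⟩⟩, ?_⟩
    rintro y ⟨hy, hiff⟩
    by_contra hne
    have hyK : y < K := lt_of_le_of_ne hy hne
    have := (hiff ⟨y, hyK⟩).mp (hall ⟨y, hyK⟩)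
    simp at this
  · push_neg at hall
    obtain ⟨k₀, hk₀⟩ := hall
    set B := Finset.univ.filter (fun k : Fin K => d k ≤ wb k) with hB
    have hBne : B.Nonempty := ⟨k₀, by simp [hB, hk₀]⟩
    set m := B.min' hBne with hm
    have hmB : m ∈ B := Finset.min'_mem _ _
    have hmle : d m ≤ wb m := by simpa [hB] using hmB
    refine ⟨(m : ℕ), ⟨le_of_lt m.2, fun k => ?_⟩, ?_⟩
    · constructor
      · intro hk
        by_contra h
        have hmk : m ≤ k := by rw [Fin.le_def]; omega
        exact absurd (up m hmle k hmk) (not_le.mpr hk)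
      · intro hk
        by_contra h
        have hkB : k ∈ B := by simp [hB, not_lt.mp h]
        have := Finset.min'_le B k hkB
        rw [Fin.le_def] at this
        omega
    · rintro y ⟨hy, hiff⟩
      by_contra hne
      rcases lt_or_gt_of_ne hne with h | h
      · -- y < m
        have hyK : y < K := lt_of_lt_of_le h (le_of_lt m.2)
        have hky : ¬ ((y : ℕ) < y) := lt_irrefl y
        have hover : d ⟨y, hyK⟩ > wb ⟨y, hyK⟩ := by
          by_contra hno
          have : ⟨y, hyK⟩ ∈ B := by simp [hB, not_lt.mp hno]
          have := Finset.min'_le B _ this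
          rw [Fin.le_def] at this
          simp at this
          omega
        exact hky ((hiff ⟨y, hyK⟩).mp hover)
      · -- m < y
        have := (hiff m).mpr h
        exact absurd this (not_lt.mpr hmle)
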